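/- arXiv:1908.06026 — 3 statements merged into one kernel-verified Lean document; each statement's English description precedes it below -/
import Mathlib

section
/- The class 𝓔 is closed under composition: if F, G ∈ 𝓔, then F ∘ G ∈ 𝓔. -/
/-- The class `𝓔`: entire functions admitting an infinite exponential tower
`Fₙ = λ_{n+1}·e^{F_{n+1}}`. -/
def InE (F₀ : ℂ → ℂ) : Prop :=
  ∃ (F : ℕ → ℂ → ℂ) (l : ℕ → ℂ),
    F 0 = F₀ ∧ (∀ n, Differentiable ℂ (F n)) ∧
    ∀ n z, F n z = l (n + 1) * Complex.exp (F (n + 1) z)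

/-- the class `𝓔` is closed under composition. -/
theorem inE_comp (F G : ℂ → ℂ) (hF : InE F) (hG : InE G) : InE (F ∘ G) := by
  obtain ⟨Fn, l, hF0, hFd, hFrec⟩ := hF
  obtain ⟨Gn, m, hG0, hGd, -⟩ := hG
  have hGdiff : Differentiable ℂ G := hG0 ▸ hGd 0
  refine ⟨fun n z => Fn n (G z), l, ?_, ?_, ?_⟩
  · funext z; simp [hF0]
  · exact fun n => (hFd n).comp hGdiff
  · exact fun n z => hFrec n (G z)
end

section
/- Every function in the closure of 𝓔 (in the topology of uniform convergence on compact sets) that is non-constant is nowhere vanishing: if g is a non-constant entire function vanishing at some z₀ and (fₙ) ⊂ 𝓔 converges to g uniformly on compacts, a contradiction arises via Rouché's theorem. -/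
open Filter

/-- Members of `𝓔` are differentiable and either identically zero or nowhere zero. -/
lemma InE.diff_and_dichotomy {f : ℂ → ℂ} (h : InE f) :
    Differentiable ℂ f ∧ ((∀ z, f z = 0) ∨ ∀ z, f z ≠ 0) := by
  obtain ⟨F, l, h0, hdiff, htow⟩ := h
  refine ⟨h0 ▸ hdiff 0, ?_⟩
  by_cases hl : l 1 = 0
  · left; intro z
    rw [← h0, htow 0 z, hl, zero_mul]
  · right; intro z
    rw [← h0, htow 0 z]
    exact mul_ne_zero hl (Complex.exp_ne_zero _)

/-- a non-constant entire function in the closure of `𝓔` (uniform convergence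
on compacts) vanishing at some point yields a contradiction (via Rouché's theorem);
i.e. non-constant limits of functions of `𝓔` are nowhere vanishing. -/
theorem closure_E_nonconstant_nonvanishing
    (g : ℂ → ℂ) (hg : Differentiable ℂ g)
    (hnc : ¬ ∃ c : ℂ, ∀ z, g z = c)
    (f : ℕ → ℂ → ℂ) (hf : ∀ n, InE (f n))
    (hconv : TendstoLocallyUniformly f g atTop)
    (z₀ : ℂ) (hz₀ : g z₀ = 0) : False := by
  -- zeros of g are isolated
  have hga : AnalyticAt ℂ g z₀ := hg.analyticAt z₀
  have hne : ∀ᶠ z in nhdsWithin z₀ {z₀}ᶜ, g z ≠ 0 := by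
    rcases hga.eventually_eq_zero_or_eventually_ne_zero with h | h
    · exfalso
      apply hnc
      refine ⟨0, fun z => ?_⟩
      have : Set.EqOn g 0 Set.univ :=
        (Complex.analyticOnNhd_univ_iff_differentiable.mpr hg).eqOn_zero_of_preconnected_of_eventuallyEq_zero
          isPreconnected_univ (Set.mem_univ z₀) h
      exact this (Set.mem_univ z)
    · exact h
  rw [eventually_nhdsWithin_iff, Metric.eventually_nhds_iff] at hne
  obtain ⟨ε, hε, hne⟩ := hne
  set r : ℝ := ε / 2 with hr
  have hrpos : 0 < r := by positivity
  have hsphere : ∀ z ∈ Metric.sphere z₀ r, g z ≠ 0 := by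
    intro z hz
    have hd : dist z z₀ = r := Metric.mem_sphere.mp hz
    refine hne (by rw [hd]; linarith) ?_
    simp only [Set.mem_compl_iff, Set.mem_singleton_iff]
    intro h
    rw [h, dist_self] at hd
    linarith
  -- minimum of ‖g‖ on the sphere
  have hcs : IsCompact (Metric.sphere z₀ r) := isCompact_sphere z₀ r
  have hnsph : (Metric.sphere z₀ r).Nonempty := NormedSpace.sphere_nonempty.mpr hrpos.le
  obtain ⟨w, hw, hmin⟩ := hcs.exists_isMinOn hnsph (hg.continuous.norm.continuousOn)
  set m : ℝ := ‖g w‖ with hm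
  have hmpos : 0 < m := norm_pos_iff.mpr (hsphere w hw)
  have hlb : ∀ z ∈ Metric.sphere z₀ r, m ≤ ‖g z‖ := fun z hz => hmin hz
  -- uniform convergence on the closed ball
  have hK : IsCompact (Metric.closedBall z₀ r) := isCompact_closedBall z₀ r
  have hUnif : TendstoUniformlyOn f g atTop (Metric.closedBall z₀ r) := by
    have := (tendstoLocallyUniformlyOn_univ.mpr hconv).mono
      (Set.subset_univ (Metric.closedBall z₀ r))
    exact (tendstoLocallyUniformlyOn_iff_tendstoUniformlyOn_of_compact hK).mp this
  have hev := (Metric.tendstoUniformlyOn_iff.mp hUnif) (m / 2) (by positivity)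
  obtain ⟨n, hn⟩ := hev.exists
  -- f n is close to g on the closed ball
  have hclose : ∀ z ∈ Metric.closedBall z₀ r, ‖g z - f n z‖ < m / 2 := by
    intro z hz
    simpa [dist_eq_norm] using hn z hz
  obtain ⟨hdiff, hdich⟩ := (hf n).diff_and_dichotomy
  rcases hdich with hzero | hnz
  · -- f n ≡ 0 : contradiction on the sphere
    obtain ⟨w', hw'⟩ := hnsph
    have h1 := hclose w' (Metric.sphere_subset_closedBall hw')
    rw [hzero w', sub_zero] at h1
    have h2 := hlb w' hw'
    linarith
  · -- f n nowhere zero: max modulus principle for (f n)⁻¹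
    have hlb' : ∀ z ∈ Metric.sphere z₀ r, m / 2 ≤ ‖f n z‖ := by
      intro z hz
      have h1 := hclose z (Metric.sphere_subset_closedBall hz)
      have h2 := hlb z hz
      have := norm_sub_norm_le (g z) (f n z)
      linarith
    have hinv : Differentiable ℂ (fun z => (f n z)⁻¹) :=
      Differentiable.inv hdiff hnz
    have hfront : frontier (Metric.ball z₀ r) = Metric.sphere z₀ r :=
      frontier_ball z₀ hrpos.ne'
    have hmax : ‖(f n z₀)⁻¹‖ ≤ (m / 2)⁻¹ := by
      refine Complex.norm_le_of_forall_mem_frontier_norm_le (U := Metric.ball z₀ r) Metric.isBounded_ball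
        hinv.diffContOnCl (fun z hz => ?_) ?_
      · rw [hfront] at hz
        rw [norm_inv]
        exact inv_anti₀ (by positivity) (hlb' z hz)
      · rw [closure_ball z₀ hrpos.ne']
        exact Metric.mem_closedBall_self hrpos.le
    have hsmall : ‖f n z₀‖ < m / 2 := by
      have := hclose z₀ (Metric.mem_closedBall_self hrpos.le)
      rw [hz₀, zero_sub, norm_neg] at this
      exact this
    have hpos : 0 < ‖f n z₀‖ := norm_pos_iff.mpr (hnz z₀)
    rw [norm_inv] at hmax
    have : (m / 2)⁻¹ < ‖f n z₀‖⁻¹ := by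
      apply inv_strictAnti₀ hpos hsmall
    linarith
end

section
/- Every non-vanishing entire function is a limit, uniform on compact subsets of ℂ, of a sequence of functions from the class 𝓔; together with the constants this shows the closure of 𝓔 equals 𝒪*(ℂ) ∪ {0}, assuming that for every ε > 0 and compact K there exists f ∈ 𝓔 with |f(z) − e^z| ≤ ε on K. -/
open Filter

/-- Every entire function has an entire primitive vanishing at `0`. -/
lemma exists_primitive (φ : ℂ → ℂ) (hφ : Differentiable ℂ φ) :
    ∃ h : ℂ → ℂ, h 0 = 0 ∧ ∀ z, HasDerivAt h (φ z) z := by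
  have hφ' : Differentiable ℂ (deriv φ) :=
    Complex.analyticOnNhd_univ_iff_differentiable.mp
      (Complex.analyticOnNhd_univ_iff_differentiable.mpr hφ).deriv
  have contF : ∀ x : ℂ, Continuous fun t : ℝ => x * φ ((t : ℂ) * x) := fun x =>
    continuous_const.mul (hφ.continuous.comp (Complex.continuous_ofReal.mul continuous_const))
  have contF' : ∀ x : ℂ, Continuous fun t : ℝ =>
      φ ((t : ℂ) * x) + x * ((t : ℂ) * deriv φ ((t : ℂ) * x)) := fun x => by
    have hc : Continuous fun t : ℝ => (t : ℂ) * x :=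
      Complex.continuous_ofReal.mul continuous_const
    exact (hφ.continuous.comp hc).add
      (continuous_const.mul (Complex.continuous_ofReal.mul (hφ'.continuous.comp hc)))
  refine ⟨fun z => ∫ t in (0:ℝ)..1, z * φ ((t : ℂ) * z), by simp, ?_⟩
  intro x₀
  set R : ℝ := ‖x₀‖ + 1 with hR
  obtain ⟨C₁, hC₁⟩ := (isCompact_closedBall (0:ℂ) R).exists_bound_of_continuousOn
    hφ.continuous.continuousOn
  obtain ⟨C₂, hC₂⟩ := (isCompact_closedBall (0:ℂ) R).exists_bound_of_continuousOn
    hφ'.continuous.continuousOn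
  have hC₂0 : 0 ≤ C₂ := le_trans (norm_nonneg _) (hC₂ 0 (by simp [hR]; positivity))
  have hxball : ∀ x ∈ Metric.ball x₀ 1, ‖x‖ ≤ R := by
    intro x hx
    have h1 := mem_ball_iff_norm.mp hx
    calc ‖x‖ = ‖x₀ + (x - x₀)‖ := by ring_nf
      _ ≤ ‖x₀‖ + ‖x - x₀‖ := norm_add_le _ _
      _ ≤ R := by rw [hR]; nlinarith
  have hmem : ∀ (t : ℝ), t ∈ Set.uIoc (0:ℝ) 1 → ∀ x ∈ Metric.ball x₀ 1,
      (t : ℂ) * x ∈ Metric.closedBall (0:ℂ) R := by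
    intro t ht x hx
    have ht' : t ∈ Set.Ioc (0:ℝ) 1 := by rwa [Set.uIoc_of_le zero_le_one] at ht
    have hxn := hxball x hx
    simp only [Metric.mem_closedBall, dist_zero_right, norm_mul, Complex.norm_real,
      Real.norm_eq_abs, abs_of_pos ht'.1]
    nlinarith [ht'.2, norm_nonneg x, ht'.1.le]
  have key := intervalIntegral.hasDerivAt_integral_of_dominated_loc_of_deriv_le
    (F := fun x t => x * φ ((t : ℂ) * x))
    (F' := fun x t => φ ((t : ℂ) * x) + x * ((t : ℂ) * deriv φ ((t : ℂ) * x)))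
    (x₀ := x₀) (a := (0:ℝ)) (b := 1) (μ := MeasureTheory.volume)
    (bound := fun _ => C₁ + R * C₂) (Metric.ball_mem_nhds x₀ one_pos)
    (Filter.Eventually.of_forall fun x => (contF x).aestronglyMeasurable)
    ((contF x₀).intervalIntegrable _ _)
    ((contF' x₀).aestronglyMeasurable)
    ?_ intervalIntegrable_const ?_
  · -- conclude
    have hD := key.2
    have hfund : ∀ t ∈ Set.uIcc (0:ℝ) 1,
        HasDerivAt (fun s : ℝ => (s : ℂ) * φ ((s : ℂ) * x₀))
          (φ ((t : ℂ) * x₀) + x₀ * ((t : ℂ) * deriv φ ((t : ℂ) * x₀))) t := by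
      intro t _
      have h2 : HasDerivAt (fun w : ℂ => φ (w * x₀))
          (deriv φ ((t : ℂ) * x₀) * x₀) (t : ℂ) := by
        have := ((hφ ((t : ℂ) * x₀)).hasDerivAt).comp (t : ℂ)
          ((hasDerivAt_id ((t : ℂ))).mul_const x₀)
        simp at this; exact this
      have hinner := (hasDerivAt_id (t : ℂ)).mul h2
      have := hinner.comp_ofReal
      refine HasDerivAt.congr_deriv this ?_
      simp only [id_eq]
      ring
    have hint : IntervalIntegrable
        (fun t : ℝ => φ ((t : ℂ) * x₀) + x₀ * ((t : ℂ) * deriv φ ((t : ℂ) * x₀)))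
        MeasureTheory.volume 0 1 := (contF' x₀).intervalIntegrable _ _
    have heval := intervalIntegral.integral_eq_sub_of_hasDerivAt hfund hint
    simp only [Complex.ofReal_one, Complex.ofReal_zero, one_mul, zero_mul] at heval
    rw [heval] at hD
    simpa using hD
  · -- bound
    filter_upwards with t
    intro ht x hx
    have hm := hmem t ht x hx
    have h1 : ‖φ ((t : ℂ) * x)‖ ≤ C₁ := hC₁ _ hm
    have h2 : ‖deriv φ ((t : ℂ) * x)‖ ≤ C₂ := hC₂ _ hm
    have ht' : t ∈ Set.Ioc (0:ℝ) 1 := by rwa [Set.uIoc_of_le zero_le_one] at ht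
    have hxn := hxball x hx
    calc ‖φ ((t : ℂ) * x) + x * ((t : ℂ) * deriv φ ((t : ℂ) * x))‖
        ≤ ‖φ ((t : ℂ) * x)‖ + ‖x * ((t : ℂ) * deriv φ ((t : ℂ) * x))‖ := norm_add_le _ _
      _ = ‖φ ((t : ℂ) * x)‖ + ‖x‖ * (|t| * ‖deriv φ ((t : ℂ) * x)‖) := by
          simp [norm_mul, Complex.norm_real, Real.norm_eq_abs, mul_assoc]
      _ ≤ C₁ + R * C₂ := by
          have habs : |t| ≤ 1 := by rw [abs_of_pos ht'.1]; exact ht'.2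
          have h0 : (0:ℝ) ≤ |t| := abs_nonneg t
          have h3 := norm_nonneg (deriv φ ((t : ℂ) * x))
          have h4 := norm_nonneg x
          have hRpos : (0:ℝ) ≤ R := by rw [hR]; positivity
          have h5 : |t| * ‖deriv φ ((t : ℂ) * x)‖ ≤ C₂ := le_trans (by nlinarith) h2
          have h6 : ‖x‖ * (|t| * ‖deriv φ ((t : ℂ) * x)‖) ≤ R * C₂ :=
            mul_le_mul hxn h5 (by positivity) hRpos
          linarith
  · -- differentiability in x
    filter_upwards with t
    intro ht x hx
    have h2 : HasDerivAt (fun x : ℂ => φ ((t : ℂ) * x))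
        (deriv φ ((t : ℂ) * x) * (t : ℂ)) x := by
      have hin : HasDerivAt (fun x : ℂ => (t : ℂ) * x) (t : ℂ) x := by
        simpa using (hasDerivAt_id x).const_mul (t : ℂ)
      have := ((hφ ((t : ℂ) * x)).hasDerivAt).comp x hin
      exact this
    have := (hasDerivAt_id x).mul h2
    refine HasDerivAt.congr_deriv this ?_
    simp only [id_eq]
    ring
/-- Every non-vanishing entire function is `exp` of an entire function. -/
lemma exists_exp_eq (g : ℂ → ℂ) (hg : Differentiable ℂ g) (hne : ∀ z, g z ≠ 0) :
    ∃ h : ℂ → ℂ, Differentiable ℂ h ∧ ∀ z, g z = Complex.exp (h z) := by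
  have hg' : Differentiable ℂ (deriv g) :=
    Complex.analyticOnNhd_univ_iff_differentiable.mp
      (Complex.analyticOnNhd_univ_iff_differentiable.mpr hg).deriv
  obtain ⟨h₀, h₀0, hh₀⟩ := exists_primitive (fun z => deriv g z / g z)
    (hg'.div hg hne)
  set h : ℂ → ℂ := fun z => Complex.log (g 0) + h₀ z with hh
  have hder : ∀ z, HasDerivAt h (deriv g z / g z) z := fun z => (hh₀ z).const_add _
  have hexp0 : Complex.exp (h 0) = g 0 := by
    simp [hh, h₀0, Complex.exp_log (hne 0)]
  set ψ : ℂ → ℂ := fun z => g z * Complex.exp (-(h z)) with hψ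
  have hψd : ∀ z, HasDerivAt ψ 0 z := by
    intro z
    have h1 : HasDerivAt g (deriv g z) z := (hg z).hasDerivAt
    have h2 : HasDerivAt (fun z => Complex.exp (-(h z)))
        (Complex.exp (-(h z)) * -(deriv g z / g z)) z := ((hder z).neg).cexp
    have h3 := h1.mul h2
    have h4 : g z * (Complex.exp (-(h z)) * -(deriv g z / g z))
        = -(deriv g z * Complex.exp (-(h z))) := by
      rw [div_eq_mul_inv]
      field_simp [hne z]
    rw [h4] at h3
    simp at h3; exact h3
  have hconst : ∀ z, ψ z = ψ 0 := fun z =>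
    is_const_of_deriv_eq_zero (fun w => (hψd w).differentiableAt)
      (fun w => (hψd w).deriv) z 0
  have hψ0 : ψ 0 = 1 := by
    have : ψ 0 = g 0 * Complex.exp (-(h 0)) := rfl
    rw [this, ← hexp0, ← Complex.exp_add]
    simp
  refine ⟨h, fun z => (hder z).differentiableAt, fun z => ?_⟩
  have hz1 : g z * Complex.exp (-(h z)) = 1 := (hconst z).trans hψ0
  rw [Complex.exp_neg, mul_inv_eq_one₀ (Complex.exp_ne_zero _)] at hz1
  exact hz1
lemma InE.comp {f h : ℂ → ℂ} (hf : InE f) (hh : Differentiable ℂ h) :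
    InE (fun z => f (h z)) := by
  obtain ⟨F, l, h0, hdiff, hrec⟩ := hf
  exact ⟨fun n z => F n (h z), l, by funext z; show F 0 (h z) = f (h z); rw [h0], fun n => (hdiff n).comp hh,
    fun n z => hrec n (h z)⟩

/-- assuming `e^z` can be approximated on compacts by functions of `𝓔`
(Theorem 1 of the paper), every non-vanishing entire function is a limit, uniform on
compact subsets of `ℂ`, of a sequence of functions of `𝓔`. -/
theorem closure_E_contains_nonvanishing
    (happrox : ∀ ε > (0 : ℝ), ∀ K : Set ℂ, IsCompact K →
      ∃ f : ℂ → ℂ, InE f ∧ ∀ z ∈ K, ‖f z - Complex.exp z‖ ≤ ε)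
    (g : ℂ → ℂ) (hg : Differentiable ℂ g) (hne : ∀ z, g z ≠ 0) :
    ∃ f : ℕ → ℂ → ℂ, (∀ n, InE (f n)) ∧ TendstoLocallyUniformly f g atTop := by
  obtain ⟨H, hH, hgH⟩ := exists_exp_eq g hg hne
  have hsel : ∀ n : ℕ, ∃ f : ℂ → ℂ, InE f ∧
      ∀ z ∈ Metric.closedBall (0:ℂ) n, ‖f (H z) - g z‖ ≤ 1 / (n + 1) := by
    intro n
    obtain ⟨f, hf, hb⟩ := happrox (1 / (n + 1)) (by positivity)
      (H '' Metric.closedBall (0:ℂ) n) ((isCompact_closedBall _ _).image hH.continuous)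
    exact ⟨f, hf, fun z hz => by rw [hgH z]; exact hb _ ⟨z, hz, rfl⟩⟩
  choose f hfE hfb using hsel
  refine ⟨fun n z => f n (H z), fun n => (hfE n).comp hH, ?_⟩
  rw [tendstoLocallyUniformly_iff_forall_isCompact]
  intro K hK
  rw [Metric.tendstoUniformlyOn_iff]
  intro ε hε
  obtain ⟨R, hRK⟩ := hK.isBounded.subset_closedBall 0
  obtain ⟨N, hN⟩ := exists_nat_gt (max R (1 / ε))
  filter_upwards [eventually_ge_atTop N] with n hn
  intro z hz
  have hzball : z ∈ Metric.closedBall (0:ℂ) n := by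
    apply Metric.closedBall_subset_closedBall _ (hRK hz)
    calc R ≤ max R (1/ε) := le_max_left _ _
      _ ≤ N := hN.le
      _ ≤ n := Nat.cast_le.mpr hn
  have hb := hfb n z hzball
  have hlt : 1 / ((n:ℝ) + 1) < ε := by
    have h1 : 1 / ε < (n:ℝ) + 1 := by
      calc 1/ε ≤ max R (1/ε) := le_max_right _ _
        _ < N := hN
        _ ≤ (n:ℝ) := Nat.cast_le.mpr hn
        _ < (n:ℝ) + 1 := by linarith
    rw [div_lt_iff₀ (by positivity)]
    rw [div_lt_iff₀ hε] at h1
    nlinarith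
  calc dist (g z) (f n (H z)) = ‖f n (H z) - g z‖ := by
        rw [dist_comm, dist_eq_norm]
    _ ≤ 1 / ((n:ℝ) + 1) := hb
    _ < ε := hlt
end
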